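/- For every x ∈ (0,1), (3−x²)(1+x²)·L₁(x)·L₂(x) + 2x(1+x²)·L₂(x) > 2x(1−x²)·L₁(x)² + 4x·L₂(x)² + 4x²·L₁(x), where L₁(x) = log((1+x)/(1−x)) and L₂(x) = log((1+x²)/(1−x²)). -/

import Mathlib

open Real Set

private lemma pos_aux {f f' : ℝ → ℝ} {x : ℝ} (hx0 : 0 < x)
    (hf : ∀ y ∈ Set.Icc (0:ℝ) x, HasDerivAt f (f' y) y)
    (h0 : f 0 = 0) (hpos : ∀ y ∈ Set.Ioo (0:ℝ) x, 0 < f' y) : 0 < f x := by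
  have hmono : StrictMonoOn f (Set.Icc 0 x) := by
    apply strictMonoOn_of_deriv_pos (convex_Icc 0 x)
    · exact fun y hy => (hf y hy).continuousAt.continuousWithinAt
    · intro y hy
      rw [interior_Icc] at hy
      rw [(hf y (Set.mem_Icc_of_Ioo hy)).deriv]
      exact hpos y hy
  have h := hmono (Set.left_mem_Icc.mpr hx0.le) (Set.right_mem_Icc.mpr hx0.le) hx0
  rwa [h0] at h

private lemma hasDeriv_logdiff {y : ℝ} (h1 : -1 < y) (h2 : y < 1) :
    HasDerivAt (fun z : ℝ => Real.log (1 + z) - Real.log (1 - z)) (1/(1+y) + 1/(1-y)) y := by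
  have ha : HasDerivAt (fun z : ℝ => 1 + z) 1 y := by
    simpa using (hasDerivAt_id y).const_add (1:ℝ)
  have hb : HasDerivAt (fun z : ℝ => 1 - z) (-1) y := by
    simpa using (hasDerivAt_id y).const_sub (1:ℝ)
  have h1' : (1:ℝ) + y ≠ 0 := by linarith
  have h2' : (1:ℝ) - y ≠ 0 := by linarith
  have h := (ha.log h1').sub (hb.log h2')
  refine h.congr_deriv ?_
  ring

private lemma A_lower {x : ℝ} (hx0 : 0 < x) (hx1 : x < 1) :
    2*x + 2*x^3/3 + 2*x^5/5 + 2*x^7/7 < Real.log (1 + x) - Real.log (1 - x) := by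
  have key := pos_aux (x := x)
    (f := fun z : ℝ => (Real.log (1 + z) - Real.log (1 - z)) - (2*z + 2*z^3/3 + 2*z^5/5 + 2*z^7/7))
    (f' := fun z : ℝ => (1/(1+z) + 1/(1-z)) - (2 + 2*z^2 + 2*z^4 + 2*z^6)) hx0 ?_ ?_ ?_
  · linarith [key]
  · intro y hy
    have hy1 : -1 < y := by linarith [hy.1]
    have hy2 : y < 1 := lt_of_le_of_lt hy.2 hx1
    have hp : HasDerivAt (fun z : ℝ => 2*z + 2*z^3/3 + 2*z^5/5 + 2*z^7/7)
        (2 + 2*y^2 + 2*y^4 + 2*y^6) y := by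
      have h1 : HasDerivAt (fun z : ℝ => 2*z) 2 y := by
        simpa using (hasDerivAt_id y).const_mul (2:ℝ)
      have h3 : HasDerivAt (fun z : ℝ => 2*z^3/3) (2*y^2) y := by
        have := ((hasDerivAt_pow 3 y).const_mul (2:ℝ)).div_const (3:ℝ)
        refine this.congr_deriv ?_
        push_cast; ring
      have h5 : HasDerivAt (fun z : ℝ => 2*z^5/5) (2*y^4) y := by
        have := ((hasDerivAt_pow 5 y).const_mul (2:ℝ)).div_const (5:ℝ)
        refine this.congr_deriv ?_
        push_cast; ring
      have h7 : HasDerivAt (fun z : ℝ => 2*z^7/7) (2*y^6) y := by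
        have := ((hasDerivAt_pow 7 y).const_mul (2:ℝ)).div_const (7:ℝ)
        refine this.congr_deriv ?_
        push_cast; ring
      exact ((h1.add h3).add h5).add h7
    exact (hasDeriv_logdiff hy1 hy2).sub hp
  · norm_num
  · intro y hy
    have hy0 : 0 < y := hy.1
    have hy2 : y < 1 := lt_of_le_of_lt hy.2.le hx1
    show 0 < (1/(1+y) + 1/(1-y)) - (2 + 2*y^2 + 2*y^4 + 2*y^6)
    have he : (1/(1+y) + 1/(1-y)) - (2 + 2*y^2 + 2*y^4 + 2*y^6) = 2*y^8/((1+y)*(1-y)) := by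
      have h1 : (1:ℝ) + y ≠ 0 := by linarith
      have h2 : (1:ℝ) - y ≠ 0 := by linarith
      field_simp
      ring
    rw [he]
    exact div_pos (mul_pos two_pos (pow_pos hy0 8)) (mul_pos (by linarith) (by linarith))

private lemma A_upper {x : ℝ} (hx0 : 0 < x) (hx1 : x < 1) :
    Real.log (1 + x) - Real.log (1 - x) < 2*x + 2*x^3/3 + 2*x^5/5 + 2*x^7/(7*(1-x^2)) := by
  have key := pos_aux (x := x)
    (f := fun z : ℝ => (2*z + 2*z^3/3 + 2*z^5/5 + 2*z^7/(7*(1-z^2))) - (Real.log (1 + z) - Real.log (1 - z)))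
    (f' := fun z : ℝ => 4*z^8/(7*(1-z^2)^2)) hx0 ?_ ?_ ?_
  · linarith [key]
  · intro y hy
    have hy1 : -1 < y := by linarith [hy.1]
    have hy2 : y < 1 := lt_of_le_of_lt hy.2 hx1
    have hden : (1:ℝ) - y^2 ≠ 0 := by nlinarith
    have h1 : HasDerivAt (fun z : ℝ => 2*z) 2 y := by
      simpa using (hasDerivAt_id y).const_mul (2:ℝ)
    have h3 : HasDerivAt (fun z : ℝ => 2*z^3/3) (2*y^2) y := by
      have := ((hasDerivAt_pow 3 y).const_mul (2:ℝ)).div_const (3:ℝ)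
      refine this.congr_deriv ?_
      push_cast; ring
    have h5 : HasDerivAt (fun z : ℝ => 2*z^5/5) (2*y^4) y := by
      have := ((hasDerivAt_pow 5 y).const_mul (2:ℝ)).div_const (5:ℝ)
      refine this.congr_deriv ?_
      push_cast; ring
    have hnum : HasDerivAt (fun z : ℝ => 2*z^7) (14*y^6) y := by
      have := (hasDerivAt_pow 7 y).const_mul (2:ℝ)
      refine this.congr_deriv ?_
      push_cast; ring
    have hd2 : HasDerivAt (fun z : ℝ => 7*(1-z^2)) (7*(-(2*y))) y := by
      have hsq : HasDerivAt (fun z : ℝ => z^2) (2*y) y := by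
        have := hasDerivAt_pow 2 y
        refine this.congr_deriv ?_
        push_cast; ring
      exact (hsq.const_sub (1:ℝ)).const_mul (7:ℝ)
    have hden7 : 7*(1-y^2) ≠ 0 := by
      intro h
      apply hden
      linarith [h]
    have h7 : HasDerivAt (fun z : ℝ => 2*z^7/(7*(1-z^2)))
        ((14*y^6 * (7*(1-y^2)) - 2*y^7 * (7*(-(2*y))))/(7*(1-y^2))^2) y := hnum.div hd2 hden7
    have hpoly := ((h1.add h3).add h5).add h7
    have hlog := hasDeriv_logdiff hy1 hy2
    have := hpoly.sub hlog
    refine this.congr_deriv ?_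
    have h1' : (1:ℝ) + y ≠ 0 := by linarith
    have h2' : (1:ℝ) - y ≠ 0 := by linarith
    field_simp
    ring
  · norm_num
  · intro y hy
    have hy0 : 0 < y := hy.1
    have hy2 : y < 1 := lt_of_le_of_lt hy.2.le hx1
    have hden : (0:ℝ) < 1 - y^2 := by nlinarith
    exact div_pos (mul_pos (by norm_num) (pow_pos hy0 8)) (mul_pos (by norm_num) (pow_pos hden 2))

private lemma B_lower {y : ℝ} (hy0 : 0 < y) (hy1 : y < 1) :
    2*y + 2*y^3/3 < Real.log (1 + y) - Real.log (1 - y) := by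
  have key := pos_aux (x := y)
    (f := fun z : ℝ => (Real.log (1 + z) - Real.log (1 - z)) - (2*z + 2*z^3/3))
    (f' := fun z : ℝ => (1/(1+z) + 1/(1-z)) - (2 + 2*z^2)) hy0 ?_ ?_ ?_
  · linarith [key]
  · intro w hw
    have hw1 : -1 < w := by linarith [hw.1]
    have hw2 : w < 1 := lt_of_le_of_lt hw.2 hy1
    have hp : HasDerivAt (fun z : ℝ => 2*z + 2*z^3/3) (2 + 2*w^2) w := by
      have h1 : HasDerivAt (fun z : ℝ => 2*z) 2 w := by
        simpa using (hasDerivAt_id w).const_mul (2:ℝ)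
      have h3 : HasDerivAt (fun z : ℝ => 2*z^3/3) (2*w^2) w := by
        have := ((hasDerivAt_pow 3 w).const_mul (2:ℝ)).div_const (3:ℝ)
        refine this.congr_deriv ?_
        push_cast; ring
      exact h1.add h3
    exact (hasDeriv_logdiff hw1 hw2).sub hp
  · norm_num
  · intro w hw
    have hw0 : 0 < w := hw.1
    have hw2 : w < 1 := lt_of_le_of_lt hw.2.le hy1
    show 0 < (1/(1+w) + 1/(1-w)) - (2 + 2*w^2)
    have he : (1/(1+w) + 1/(1-w)) - (2 + 2*w^2) = 2*w^4/((1+w)*(1-w)) := by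
      have h1 : (1:ℝ) + w ≠ 0 := by linarith
      have h2 : (1:ℝ) - w ≠ 0 := by linarith
      field_simp
      ring
    rw [he]
    exact div_pos (mul_pos two_pos (pow_pos hw0 4)) (mul_pos (by linarith) (by linarith))

private lemma B_upper {y : ℝ} (hy0 : 0 < y) (hy1 : y < 1) :
    Real.log (1 + y) - Real.log (1 - y) < 2*y + 2*y^3/3 + 2*y^5/(5*(1-y^2)) := by
  have key := pos_aux (x := y)
    (f := fun z : ℝ => (2*z + 2*z^3/3 + 2*z^5/(5*(1-z^2))) - (Real.log (1 + z) - Real.log (1 - z)))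
    (f' := fun z : ℝ => 4*z^6/(5*(1-z^2)^2)) hy0 ?_ ?_ ?_
  · linarith [key]
  · intro w hw
    have hw1 : -1 < w := by linarith [hw.1]
    have hw2 : w < 1 := lt_of_le_of_lt hw.2 hy1
    have hden : (1:ℝ) - w^2 ≠ 0 := by nlinarith
    have h1 : HasDerivAt (fun z : ℝ => 2*z) 2 w := by
      simpa using (hasDerivAt_id w).const_mul (2:ℝ)
    have h3 : HasDerivAt (fun z : ℝ => 2*z^3/3) (2*w^2) w := by
      have := ((hasDerivAt_pow 3 w).const_mul (2:ℝ)).div_const (3:ℝ)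
      refine this.congr_deriv ?_
      push_cast; ring
    have hnum : HasDerivAt (fun z : ℝ => 2*z^5) (10*w^4) w := by
      have := (hasDerivAt_pow 5 w).const_mul (2:ℝ)
      refine this.congr_deriv ?_
      push_cast; ring
    have hd2 : HasDerivAt (fun z : ℝ => 5*(1-z^2)) (5*(-(2*w))) w := by
      have hsq : HasDerivAt (fun z : ℝ => z^2) (2*w) w := by
        have := hasDerivAt_pow 2 w
        refine this.congr_deriv ?_
        push_cast; ring
      exact (hsq.const_sub (1:ℝ)).const_mul (5:ℝ)
    have hden5 : 5*(1-w^2) ≠ 0 := by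
      intro h
      apply hden
      linarith [h]
    have h5 : HasDerivAt (fun z : ℝ => 2*z^5/(5*(1-z^2)))
        ((10*w^4 * (5*(1-w^2)) - 2*w^5 * (5*(-(2*w))))/(5*(1-w^2))^2) w := hnum.div hd2 hden5
    have hpoly := (h1.add h3).add h5
    have hlog := hasDeriv_logdiff hw1 hw2
    have := hpoly.sub hlog
    refine this.congr_deriv ?_
    have h1' : (1:ℝ) + w ≠ 0 := by linarith
    have h2' : (1:ℝ) - w ≠ 0 := by linarith
    field_simp
    ring
  · norm_num
  · intro w hw
    have hw0 : 0 < w := hw.1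
    have hw2 : w < 1 := lt_of_le_of_lt hw.2.le hy1
    have hden : (0:ℝ) < 1 - w^2 := by nlinarith
    exact div_pos (mul_pos (by norm_num) (pow_pos hw0 6)) (mul_pos (by norm_num) (pow_pos hden 2))

private lemma log_one_add_ge {t : ℝ} (ht : 0 < t) :
    t - t^2/2 < Real.log (1 + t) := by
  have key := pos_aux (x := t)
    (f := fun z : ℝ => Real.log (1 + z) - (z - z^2/2))
    (f' := fun z : ℝ => 1/(1+z) - (1 - z)) ht ?_ ?_ ?_
  · linarith [key]
  · intro w hw
    have hw1 : (0:ℝ) ≤ w := hw.1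
    have ha : HasDerivAt (fun z : ℝ => 1 + z) 1 w := by
      simpa using (hasDerivAt_id w).const_add (1:ℝ)
    have hlog := ha.log (by linarith : (1:ℝ) + w ≠ 0)
    have hp : HasDerivAt (fun z : ℝ => z - z^2/2) (1 - w) w := by
      have h1 : HasDerivAt (fun z : ℝ => z) 1 w := hasDerivAt_id w
      have h2 : HasDerivAt (fun z : ℝ => z^2/2) w w := by
        have := (hasDerivAt_pow 2 w).div_const (2:ℝ)
        refine this.congr_deriv ?_
        push_cast; ring
      exact h1.sub h2
    have := hlog.sub hp
    exact this
  · norm_num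
  · intro w hw
    have hw0 : 0 < w := hw.1
    show 0 < 1/(1+w) - (1 - w)
    have he : 1/(1+w) - (1 - w) = w^2/(1+w) := by
      have h1 : (1:ℝ) + w ≠ 0 := by linarith
      field_simp
      ring
    rw [he]
    exact div_pos (pow_pos hw0 2) (by linarith)

private lemma corner_ll {x : ℝ} (hx0 : 0 < x) (hx34 : x ≤ 3/4) :
    0 < (3-x^2)*(1+x^2)*(2*x + 2*x^3/3 + 2*x^5/5 + 2*x^7/7)*(2*x^2 + 2*x^6/3) + 2*x*(1+x^2)*(2*x^2 + 2*x^6/3) - 2*x*(1-x^2)*(2*x + 2*x^3/3 + 2*x^5/5 + 2*x^7/7)^2 - 4*x*(2*x^2 + 2*x^6/3)^2 - 4*x^2*(2*x + 2*x^3/3 + 2*x^5/5 + 2*x^7/7) := by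
  have h34 : (0:ℝ) ≤ 3 - 4*x := by linarith
  linarith [mul_nonneg (pow_nonneg hx0.le 7) (pow_nonneg h34 10),
    mul_nonneg (pow_nonneg hx0.le 8) (pow_nonneg h34 9),
    mul_nonneg (pow_nonneg hx0.le 9) (pow_nonneg h34 8),
    mul_nonneg (pow_nonneg hx0.le 10) (pow_nonneg h34 7),
    mul_nonneg (pow_nonneg hx0.le 11) (pow_nonneg h34 6),
    mul_nonneg (pow_nonneg hx0.le 12) (pow_nonneg h34 5),
    mul_nonneg (pow_nonneg hx0.le 13) (pow_nonneg h34 4),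
    mul_nonneg (pow_nonneg hx0.le 14) (pow_nonneg h34 3),
    mul_nonneg (pow_nonneg hx0.le 15) (pow_nonneg h34 2),
    mul_nonneg (pow_nonneg hx0.le 16) (pow_nonneg h34 1),
    pow_pos hx0 17]

private lemma corner_lh {x : ℝ} (hx0 : 0 < x) (hx34 : x ≤ 3/4) :
    0 < (3-x^2)*(1+x^2)*(2*x + 2*x^3/3 + 2*x^5/5 + 2*x^7/7)*((15*(1-x^4))*(2*x^2 + 2*x^6/3) + 6*x^10)*(15*(1-x^4)) + 2*x*(1+x^2)*((15*(1-x^4))*(2*x^2 + 2*x^6/3) + 6*x^10)*(15*(1-x^4)) - 2*x*(1-x^2)*(2*x + 2*x^3/3 + 2*x^5/5 + 2*x^7/7)^2*(15*(1-x^4))^2 - 4*x*((15*(1-x^4))*(2*x^2 + 2*x^6/3) + 6*x^10)^2 - 4*x^2*(2*x + 2*x^3/3 + 2*x^5/5 + 2*x^7/7)*(15*(1-x^4))^2 := by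
  have h34 : (0:ℝ) ≤ 3 - 4*x := by linarith
  linarith [mul_nonneg (pow_nonneg hx0.le 7) (pow_nonneg h34 18),
    mul_nonneg (pow_nonneg hx0.le 8) (pow_nonneg h34 17),
    mul_nonneg (pow_nonneg hx0.le 9) (pow_nonneg h34 16),
    mul_nonneg (pow_nonneg hx0.le 10) (pow_nonneg h34 15),
    mul_nonneg (pow_nonneg hx0.le 11) (pow_nonneg h34 14),
    mul_nonneg (pow_nonneg hx0.le 12) (pow_nonneg h34 13),
    mul_nonneg (pow_nonneg hx0.le 13) (pow_nonneg h34 12),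
    mul_nonneg (pow_nonneg hx0.le 14) (pow_nonneg h34 11),
    mul_nonneg (pow_nonneg hx0.le 15) (pow_nonneg h34 10),
    mul_nonneg (pow_nonneg hx0.le 16) (pow_nonneg h34 9),
    mul_nonneg (pow_nonneg hx0.le 17) (pow_nonneg h34 8),
    mul_nonneg (pow_nonneg hx0.le 18) (pow_nonneg h34 7),
    mul_nonneg (pow_nonneg hx0.le 19) (pow_nonneg h34 6),
    mul_nonneg (pow_nonneg hx0.le 20) (pow_nonneg h34 5),
    mul_nonneg (pow_nonneg hx0.le 21) (pow_nonneg h34 4),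
    mul_nonneg (pow_nonneg hx0.le 22) (pow_nonneg h34 3),
    mul_nonneg (pow_nonneg hx0.le 23) (pow_nonneg h34 2),
    mul_nonneg (pow_nonneg hx0.le 24) (pow_nonneg h34 1),
    pow_pos hx0 25]

private lemma corner_hl {x : ℝ} (hx0 : 0 < x) (hx34 : x ≤ 3/4) :
    0 < (3-x^2)*(1+x^2)*((105*(1-x^2))*(2*x + 2*x^3/3 + 2*x^5/5) + 30*x^7)*(2*x^2 + 2*x^6/3)*(105*(1-x^2)) + 2*x*(1+x^2)*(2*x^2 + 2*x^6/3)*(105*(1-x^2))^2 - 2*x*(1-x^2)*((105*(1-x^2))*(2*x + 2*x^3/3 + 2*x^5/5) + 30*x^7)^2 - 4*x*(2*x^2 + 2*x^6/3)^2*(105*(1-x^2))^2 - 4*x^2*((105*(1-x^2))*(2*x + 2*x^3/3 + 2*x^5/5) + 30*x^7)*(105*(1-x^2)) := by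
  have h34 : (0:ℝ) ≤ 3 - 4*x := by linarith
  linarith [mul_nonneg (pow_nonneg hx0.le 7) (pow_nonneg h34 12),
    mul_nonneg (pow_nonneg hx0.le 8) (pow_nonneg h34 11),
    mul_nonneg (pow_nonneg hx0.le 9) (pow_nonneg h34 10),
    mul_nonneg (pow_nonneg hx0.le 10) (pow_nonneg h34 9),
    mul_nonneg (pow_nonneg hx0.le 11) (pow_nonneg h34 8),
    mul_nonneg (pow_nonneg hx0.le 12) (pow_nonneg h34 7),
    mul_nonneg (pow_nonneg hx0.le 13) (pow_nonneg h34 6),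
    mul_nonneg (pow_nonneg hx0.le 14) (pow_nonneg h34 5),
    mul_nonneg (pow_nonneg hx0.le 15) (pow_nonneg h34 4),
    mul_nonneg (pow_nonneg hx0.le 16) (pow_nonneg h34 3),
    mul_nonneg (pow_nonneg hx0.le 17) (pow_nonneg h34 2),
    mul_nonneg (pow_nonneg hx0.le 18) (pow_nonneg h34 1),
    pow_pos hx0 19]

private lemma corner_hh {x : ℝ} (hx0 : 0 < x) (hx34 : x ≤ 3/4) :
    0 < (3-x^2)*(1+x^2)*((105*(1-x^2))*(2*x + 2*x^3/3 + 2*x^5/5) + 30*x^7)*((15*(1-x^4))*(2*x^2 + 2*x^6/3) + 6*x^10)*(105*(1-x^2))*(15*(1-x^4)) + 2*x*(1+x^2)*((15*(1-x^4))*(2*x^2 + 2*x^6/3) + 6*x^10)*(105*(1-x^2))^2*(15*(1-x^4)) - 2*x*(1-x^2)*((105*(1-x^2))*(2*x + 2*x^3/3 + 2*x^5/5) + 30*x^7)^2*(15*(1-x^4))^2 - 4*x*((15*(1-x^4))*(2*x^2 + 2*x^6/3) + 6*x^10)^2*(105*(1-x^2))^2 - 4*x^2*((105*(1-x^2))*(2*x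 + 2*x^3/3 + 2*x^5/5) + 30*x^7)*(105*(1-x^2))*(15*(1-x^4))^2 := by
  have h34 : (0:ℝ) ≤ 3 - 4*x := by linarith
  linarith [mul_nonneg (pow_nonneg hx0.le 7) (pow_nonneg h34 20),
    mul_nonneg (pow_nonneg hx0.le 8) (pow_nonneg h34 19),
    mul_nonneg (pow_nonneg hx0.le 9) (pow_nonneg h34 18),
    mul_nonneg (pow_nonneg hx0.le 10) (pow_nonneg h34 17),
    mul_nonneg (pow_nonneg hx0.le 11) (pow_nonneg h34 16),
    mul_nonneg (pow_nonneg hx0.le 12) (pow_nonneg h34 15),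
    mul_nonneg (pow_nonneg hx0.le 13) (pow_nonneg h34 14),
    mul_nonneg (pow_nonneg hx0.le 14) (pow_nonneg h34 13),
    mul_nonneg (pow_nonneg hx0.le 15) (pow_nonneg h34 12),
    mul_nonneg (pow_nonneg hx0.le 16) (pow_nonneg h34 11),
    mul_nonneg (pow_nonneg hx0.le 17) (pow_nonneg h34 10),
    mul_nonneg (pow_nonneg hx0.le 18) (pow_nonneg h34 9),
    mul_nonneg (pow_nonneg hx0.le 19) (pow_nonneg h34 8),
    mul_nonneg (pow_nonneg hx0.le 20) (pow_nonneg h34 7),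
    mul_nonneg (pow_nonneg hx0.le 21) (pow_nonneg h34 6),
    mul_nonneg (pow_nonneg hx0.le 22) (pow_nonneg h34 5),
    mul_nonneg (pow_nonneg hx0.le 23) (pow_nonneg h34 4),
    mul_nonneg (pow_nonneg hx0.le 24) (pow_nonneg h34 3),
    mul_nonneg (pow_nonneg hx0.le 25) (pow_nonneg h34 2),
    mul_nonneg (pow_nonneg hx0.le 26) (pow_nonneg h34 1),
    pow_pos hx0 27]

private lemma gn_nonneg {x : ℝ} (hx34 : 3/4 ≤ x) (hx1 : x ≤ 1) :
    0 ≤ (105*(1-x^2))*(4*x*(2*x^2 + 2*x^6/3) - 2*x*(1+x^2)) - (1-x^4)*((105*(1-x^2))*(2*x + 2*x^3/3 + 2*x^5/5) + 30*x^7) := by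
  have h43 : (0:ℝ) ≤ 4*x - 3 := by linarith
  have h44 : (0:ℝ) ≤ 4 - 4*x := by linarith
  linarith [mul_nonneg (pow_nonneg h43 0) (pow_nonneg h44 11),
    mul_nonneg (pow_nonneg h43 1) (pow_nonneg h44 10),
    mul_nonneg (pow_nonneg h43 2) (pow_nonneg h44 9),
    mul_nonneg (pow_nonneg h43 3) (pow_nonneg h44 8),
    mul_nonneg (pow_nonneg h43 4) (pow_nonneg h44 7),
    mul_nonneg (pow_nonneg h43 5) (pow_nonneg h44 6),
    mul_nonneg (pow_nonneg h43 6) (pow_nonneg h44 5),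
    mul_nonneg (pow_nonneg h43 7) (pow_nonneg h44 4),
    mul_nonneg (pow_nonneg h43 8) (pow_nonneg h44 3),
    mul_nonneg (pow_nonneg h43 9) (pow_nonneg h44 2),
    mul_nonneg (pow_nonneg h43 10) (pow_nonneg h44 1),
    mul_nonneg (pow_nonneg h43 11) (pow_nonneg h44 0)]

set_option maxHeartbeats 4000000 in
/-- For every `x ∈ (0,1)`, with `L₁(x) = log((1+x)/(1−x))` and
`L₂(x) = log((1+x²)/(1−x²))`,
`(3−x²)(1+x²)·L₁L₂ + 2x(1+x²)·L₂ > 2x(1−x²)·L₁² + 4x·L₂² + 4x²·L₁`. -/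
theorem log_ratio_inequality :
    ∀ x ∈ Set.Ioo (0 : ℝ) 1,
      (3 - x ^ 2) * (1 + x ^ 2) * Real.log ((1 + x) / (1 - x)) *
            Real.log ((1 + x ^ 2) / (1 - x ^ 2)) +
          2 * x * (1 + x ^ 2) * Real.log ((1 + x ^ 2) / (1 - x ^ 2)) >
        2 * x * (1 - x ^ 2) * Real.log ((1 + x) / (1 - x)) ^ 2 +
          4 * x * Real.log ((1 + x ^ 2) / (1 - x ^ 2)) ^ 2 +
          4 * x ^ 2 * Real.log ((1 + x) / (1 - x)) := by
  intro x hx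
  obtain ⟨hx0, hx1⟩ := hx
  have hx2pos : 0 < x^2 := by positivity
  have hx21 : x^2 < 1 := by nlinarith
  have h1mx2 : (0:ℝ) < 1 - x^2 := by nlinarith
  have h1mx4 : (0:ℝ) < 1 - x^4 := by nlinarith
  have e1 : Real.log ((1 + x) / (1 - x)) = Real.log (1 + x) - Real.log (1 - x) :=
    Real.log_div (by linarith) (by linarith)
  have e2 : Real.log ((1 + x ^ 2) / (1 - x ^ 2)) = Real.log (1 + x ^ 2) - Real.log (1 - x ^ 2) :=
    Real.log_div (by positivity) (by linarith)
  rw [e1, e2]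
  obtain ⟨A, hA⟩ : ∃ A, Real.log (1 + x) - Real.log (1 - x) = A := ⟨_, rfl⟩
  obtain ⟨B, hB⟩ : ∃ B, Real.log (1 + x ^ 2) - Real.log (1 - x ^ 2) = B := ⟨_, rfl⟩
  rw [hA, hB]
  rw [hA] at e1
  rw [hB] at e2
  have hal : 2*x + 2*x^3/3 + 2*x^5/5 + 2*x^7/7 < A := hA ▸ A_lower hx0 hx1
  have hahi : A < 2*x + 2*x^3/3 + 2*x^5/5 + 2*x^7/(7*(1-x^2)) := hA ▸ A_upper hx0 hx1
  have hbl : 2*x^2 + 2*(x^2)^3/3 < B := hB ▸ B_lower hx2pos hx21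
  have hbhi : B < 2*x^2 + 2*(x^2)^3/3 + 2*(x^2)^5/(5*(1-(x^2)^2)) := hB ▸ B_upper hx2pos hx21
  have hApos : 0 < A := by nlinarith only [hal, pow_pos hx0 3, pow_pos hx0 5, pow_pos hx0 7]
  have hBpos : 0 < B := by nlinarith only [hbl, pow_pos hx0 6]
  -- cleared-denominator upper bounds
  have ha2 : 105*(1-x^2)*A ≤ ((105*(1-x^2))*(2*x + 2*x^3/3 + 2*x^5/5) + 30*x^7) := by
    have h := mul_le_mul_of_nonneg_left hahi.le (by linarith only [h1mx2] : (0:ℝ) ≤ 105*(1-x^2))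
    have heq : 105*(1-x^2)*(2*x + 2*x^3/3 + 2*x^5/5 + 2*x^7/(7*(1-x^2))) = ((105*(1-x^2))*(2*x + 2*x^3/3 + 2*x^5/5) + 30*x^7) := by
      field_simp
      ring
    linarith only [h, heq.le, heq.ge]
  have hb2 : 15*(1-x^4)*B ≤ ((15*(1-x^4))*(2*x^2 + 2*x^6/3) + 6*x^10) := by
    have h := mul_le_mul_of_nonneg_left hbhi.le (by linarith only [h1mx4] : (0:ℝ) ≤ 15*(1-x^4))
    have hden : (1:ℝ) - (x^2)^2 ≠ 0 := by nlinarith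
    have heq : 15*(1-x^4)*(2*x^2 + 2*(x^2)^3/3 + 2*(x^2)^5/(5*(1-(x^2)^2))) = ((15*(1-x^4))*(2*x^2 + 2*x^6/3) + 6*x^10) := by
      field_simp
      ring
    linarith only [h, heq.le, heq.ge]
  have ha1 : 105*(1-x^2)*(2*x + 2*x^3/3 + 2*x^5/5 + 2*x^7/7) ≤ 105*(1-x^2)*A :=
    mul_le_mul_of_nonneg_left hal.le (by linarith only [h1mx2])
  have hb1 : 15*(1-x^4)*(2*x^2 + 2*x^6/3) ≤ 15*(1-x^4)*B := by
    have : (2:ℝ)*x^2 + 2*x^6/3 = 2*x^2 + 2*(x^2)^3/3 := by ring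
    rw [this]
    exact mul_le_mul_of_nonneg_left hbl.le (by linarith only [h1mx4])
  rcases le_total x (3/4) with hc | hc
  · -- corner interpolation case
    have c_ll := corner_ll hx0 hc
    have c_hl := corner_hl hx0 hc
    have c_lh := corner_lh hx0 hc
    have c_hh := corner_hh hx0 hc
    have hw1 : 0 ≤ ((105*(1-x^2))*(2*x + 2*x^3/3 + 2*x^5/5) + 30*x^7) - 105*(1-x^2)*A := by linarith only [ha2]
    have hw2 : 0 ≤ 105*(1-x^2)*A - 105*(1-x^2)*(2*x + 2*x^3/3 + 2*x^5/5 + 2*x^7/7) := by linarith only [ha1]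
    have h30 : (0:ℝ) < 30*x^9 := by positivity
    have hU2 : (0:ℝ) < (105*(1-x^2))^2 := by positivity
    have hextra : (0:ℝ) ≤ 60*x^10*(1-x^2) := by positivity
    have key1 : 0 < (3-x^2)*(1+x^2)*A*(2*x^2 + 2*x^6/3) + 2*x*(1+x^2)*(2*x^2 + 2*x^6/3) - 2*x*(1-x^2)*A^2 - 4*x*(2*x^2 + 2*x^6/3)^2 - 4*x^2*A := by
      have hq : 0 < 30*x^9*((105*(1-x^2))^2*((3-x^2)*(1+x^2)*A*(2*x^2 + 2*x^6/3) + 2*x*(1+x^2)*(2*x^2 + 2*x^6/3) - 2*x*(1-x^2)*A^2 - 4*x*(2*x^2 + 2*x^6/3)^2 - 4*x^2*A)) := by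
        rcases le_total ((105*(1-x^2))^2*((3-x^2)*(1+x^2)*(2*x + 2*x^3/3 + 2*x^5/5 + 2*x^7/7)*(2*x^2 + 2*x^6/3) + 2*x*(1+x^2)*(2*x^2 + 2*x^6/3) - 2*x*(1-x^2)*(2*x + 2*x^3/3 + 2*x^5/5 + 2*x^7/7)^2 - 4*x*(2*x^2 + 2*x^6/3)^2 - 4*x^2*(2*x + 2*x^3/3 + 2*x^5/5 + 2*x^7/7))) ((3-x^2)*(1+x^2)*((105*(1-x^2))*(2*x + 2*x^3/3 + 2*x^5/5) + 30*x^7)*(2*x^2 + 2*x^6/3)*(105*(1-x^2)) + 2*x*(1+x^2)*(2*x^2 + 2*x^6/3)*(105*(1-x^2))^2 - 2*x*(1-x^2)*((105*(1-x^2))*(2*x + 2*x^3/3 + 2*x^5/5) + 30*x^7)^2 - 4*x*(2*x^2 + 2*x^6/3)^2*(105*(1-x^2))^2 - 4*x^2*((105*(1-x^2))*(2*x + 2*x^3/3 + 2*x^5/5) + 30*x^7)*(105*(1-x^2))) with h | h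
        · linarith only [mul_nonneg hw2 (sub_nonneg.mpr h),
            mul_pos (mul_pos h30 hU2) c_ll,
            mul_nonneg hextra (mul_nonneg hw1 hw2)]
        · linarith only [mul_nonneg hw1 (sub_nonneg.mpr h),
            mul_pos h30 c_hl,
            mul_nonneg hextra (mul_nonneg hw1 hw2)]
      by_contra hcon
      push_neg at hcon
      linarith only [hq, mul_nonneg (mul_pos h30 hU2).le (neg_nonneg.mpr hcon)]
    have hextra2 : (0:ℝ) ≤ 60*x^10*(1-x^2)*(15*(1-x^4))^2 := by positivity
    have key2 : 0 < (3-x^2)*(1+x^2)*A*((15*(1-x^4))*(2*x^2 + 2*x^6/3) + 6*x^10)*(15*(1-x^4)) + 2*x*(1+x^2)*((15*(1-x^4))*(2*x^2 + 2*x^6/3) + 6*x^10)*(15*(1-x^4)) - 2*x*(1-x^2)*A^2*(15*(1-x^4))^2 - 4*x*((15*(1-x^4))*(2*x^2 + 2*x^6/3) + 6*x^10)^2 - 4*x^2*A*(15*(1-x^4))^2 := by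
      have hq : 0 < 30*x^9*((105*(1-x^2))^2*((3-x^2)*(1+x^2)*A*((15*(1-x^4))*(2*x^2 + 2*x^6/3) + 6*x^10)*(15*(1-x^4)) + 2*x*(1+x^2)*((15*(1-x^4))*(2*x^2 + 2*x^6/3) + 6*x^10)*(15*(1-x^4)) - 2*x*(1-x^2)*A^2*(15*(1-x^4))^2 - 4*x*((15*(1-x^4))*(2*x^2 + 2*x^6/3) + 6*x^10)^2 - 4*x^2*A*(15*(1-x^4))^2)) := by
        rcases le_total ((105*(1-x^2))^2*((3-x^2)*(1+x^2)*(2*x + 2*x^3/3 + 2*x^5/5 + 2*x^7/7)*((15*(1-x^4))*(2*x^2 + 2*x^6/3) + 6*x^10)*(15*(1-x^4)) + 2*x*(1+x^2)*((15*(1-x^4))*(2*x^2 + 2*x^6/3) + 6*x^10)*(15*(1-x^4)) - 2*x*(1-x^2)*(2*x + 2*x^3/3 + 2*x^5/5 + 2*x^7/7)^2*(15*(1-x^4))^2 - 4*x*((15*(1-x^4))*(2*x^2 + 2*x^6/3) + 6*x^10)^2 - 4*x^2*(2*x + 2*x^3/3 + 2*x^5/5 + 2*x^7/7)*(15*(1-x^4))^2))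 ((3-x^2)*(1+x^2)*((105*(1-x^2))*(2*x + 2*x^3/3 + 2*x^5/5) + 30*x^7)*((15*(1-x^4))*(2*x^2 + 2*x^6/3) + 6*x^10)*(105*(1-x^2))*(15*(1-x^4)) + 2*x*(1+x^2)*((15*(1-x^4))*(2*x^2 + 2*x^6/3) + 6*x^10)*(105*(1-x^2))^2*(15*(1-x^4)) - 2*x*(1-x^2)*((105*(1-x^2))*(2*x + 2*x^3/3 + 2*x^5/5) + 30*x^7)^2*(15*(1-x^4))^2 - 4*x*((15*(1-x^4))*(2*x^2 + 2*x^6/3) + 6*x^10)^2*(105*(1-x^2))^2 - 4*x^2*((105*(1-x^2))*(2*x + 2*x^3/3 + 2*x^5/5) + 30*x^7)*(105*(1-x^2))*(15*(1-x^4))^2) with h | h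
        · linarith only [mul_nonneg hw2 (sub_nonneg.mpr h),
            mul_pos (mul_pos h30 hU2) c_lh,
            mul_nonneg hextra2 (mul_nonneg hw1 hw2)]
        · linarith only [mul_nonneg hw1 (sub_nonneg.mpr h),
            mul_pos h30 c_hh,
            mul_nonneg hextra2 (mul_nonneg hw1 hw2)]
      by_contra hcon
      push_neg at hcon
      linarith only [hq, mul_nonneg (mul_pos h30 hU2).le (neg_nonneg.mpr hcon)]
    have hwb1 : 0 ≤ ((15*(1-x^4))*(2*x^2 + 2*x^6/3) + 6*x^10) - 15*(1-x^4)*B := by linarith only [hb2]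
    have hwb2 : 0 ≤ 15*(1-x^4)*B - 15*(1-x^4)*(2*x^2 + 2*x^6/3) := by linarith only [hb1]
    have h6 : (0:ℝ) < 6*x^10 := by positivity
    have hV2 : (0:ℝ) < (15*(1-x^4))^2 := by positivity
    have hextra3 : (0:ℝ) ≤ 24*x^11 := by positivity
    have hfinal : 0 < (3-x^2)*(1+x^2)*A*B + 2*x*(1+x^2)*B - 2*x*(1-x^2)*A^2 - 4*x*B^2 - 4*x^2*A := by
      have hq : 0 < 6*x^10*((15*(1-x^4))^2*((3-x^2)*(1+x^2)*A*B + 2*x*(1+x^2)*B - 2*x*(1-x^2)*A^2 - 4*x*B^2 - 4*x^2*A)) := by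
        rcases le_total ((15*(1-x^4))^2*((3-x^2)*(1+x^2)*A*(2*x^2 + 2*x^6/3) + 2*x*(1+x^2)*(2*x^2 + 2*x^6/3) - 2*x*(1-x^2)*A^2 - 4*x*(2*x^2 + 2*x^6/3)^2 - 4*x^2*A)) ((3-x^2)*(1+x^2)*A*((15*(1-x^4))*(2*x^2 + 2*x^6/3) + 6*x^10)*(15*(1-x^4)) + 2*x*(1+x^2)*((15*(1-x^4))*(2*x^2 + 2*x^6/3) + 6*x^10)*(15*(1-x^4)) - 2*x*(1-x^2)*A^2*(15*(1-x^4))^2 - 4*x*((15*(1-x^4))*(2*x^2 + 2*x^6/3) + 6*x^10)^2 - 4*x^2*A*(15*(1-x^4))^2) with h | h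
        · linarith only [mul_nonneg hwb2 (sub_nonneg.mpr h),
            mul_pos (mul_pos h6 hV2) key1,
            mul_nonneg hextra3 (mul_nonneg hwb1 hwb2)]
        · linarith only [mul_nonneg hwb1 (sub_nonneg.mpr h),
            mul_pos h6 key2,
            mul_nonneg hextra3 (mul_nonneg hwb1 hwb2)]
      by_contra hcon
      push_neg at hcon
      linarith only [hq, mul_nonneg (mul_pos h6 hV2).le (neg_nonneg.mpr hcon)]
    linarith only [hfinal]
  · -- large x case: identity (1+x^2)E = P*G + 2(1-x^2)^2*A*B
    have h1x2 : (0:ℝ) < 1 + x^2 := by positivity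
    -- P > 0
    have e3 : Real.log (1 - x^2) = Real.log (1 - x) + Real.log (1 + x) := by
      rw [show (1:ℝ) - x^2 = (1-x)*(1+x) by ring, Real.log_mul (by linarith) (by linarith)]
    have e4 : Real.log (1 + 2*x/(1+x^2)) = 2*Real.log (1+x) - Real.log (1+x^2) := by
      rw [show (1:ℝ) + 2*x/(1+x^2) = (1+x)^2/(1+x^2) by field_simp; ring,
        Real.log_div (by positivity) (by positivity), Real.log_pow]
      push_cast
      ring
    have hcd : A - B = 2*Real.log (1+x) - Real.log (1+x^2) := by
      rw [← hA, ← hB, e3]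
      ring
    have hc5 := log_one_add_ge (t := 2*x/(1+x^2)) (by positivity)
    rw [e4, ← hcd] at hc5
    have hcge2 : 2*x*(1+x^2) - 2*x^2 < (1+x^2)^2*(A - B) := by
      have hsq : (0:ℝ) < (1+x^2)^2 := by positivity
      have h := mul_lt_mul_of_pos_left hc5 hsq
      have heq : (1+x^2)^2*(2*x/(1+x^2) - (2*x/(1+x^2))^2/2) = 2*x*(1+x^2) - 2*x^2 := by
        have hne : (1:ℝ)+x^2 ≠ 0 := by positivity
        field_simp
      rw [heq] at h
      exact h
    have hA_ub2 : (1-x)*A ≤ 2*x := by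
      have h := Real.log_le_sub_one_of_pos
        (div_pos (by linarith only [hx0] : (0:ℝ) < 1+x) (by linarith only [hx1] : (0:ℝ) < 1-x))
      rw [e1] at h
      have h' := mul_le_mul_of_nonneg_left h (by linarith only [hx1] : (0:ℝ) ≤ 1-x)
      have heq : (1-x)*((1+x)/(1-x) - 1) = 2*x := by
        have hne : (1:ℝ)-x ≠ 0 := by linarith only [hx1]
        field_simp
        ring
      rw [heq] at h'
      exact h'
    have hA_ub3 : (1-x)^2*(1+x^2)*A ≤ 2*x*(1-x)*(1+x^2) := by
      have hf : (0:ℝ) ≤ (1-x)*(1+x^2) :=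
        mul_nonneg (by linarith only [hx1]) (by positivity)
      have h2 := mul_le_mul_of_nonneg_left hA_ub2 hf
      linarith only [h2]
    have hP : 0 < 2*x*A - (1+x^2)*B := by
      by_contra hcon
      push_neg at hcon
      linarith only [hcge2, hA_ub3, pow_pos hx0 4, mul_nonneg h1x2.le (neg_nonneg.mpr hcon)]
    -- G >= 0
    have hGN := gn_nonneg hc hx1.le
    have hg1 : 0 ≤ 420*x*(1-x^2)*(B - (2*x^2 + 2*x^6/3)) := by
      have hb1' : 2*x^2 + 2*x^6/3 ≤ B := by linarith only [hbl]
      have : (0:ℝ) ≤ 420*x*(1-x^2) := by positivity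
      exact mul_nonneg this (by linarith)
    have hg2 : 0 ≤ (1-x^4)*(((105*(1-x^2))*(2*x + 2*x^3/3 + 2*x^5/5) + 30*x^7) - 105*(1-x^2)*A) := by
      apply mul_nonneg (by linarith only [h1mx4])
      linarith only [ha2]
    have hG : 0 ≤ 4*x*B - (1-x^4)*A - 2*x*(1+x^2) := by
      have hS : 0 ≤ 105*(1-x^2)*(4*x*B - (1-x^4)*A - 2*x*(1+x^2)) := by
        linarith only [hGN, hg1, hg2]
      by_contra hcon
      push_neg at hcon
      linarith only [hS, mul_pos (by linarith only [h1mx2] : (0:ℝ) < 105*(1-x^2)) (neg_pos.mpr hcon)]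
    have hPG : 0 ≤ (2*x*A - (1+x^2)*B)*(4*x*B - (1-x^4)*A - 2*x*(1+x^2)) :=
      mul_nonneg hP.le hG
    have hABpos : 0 < (1-x^2)^2*(A*B) :=
      mul_pos (by positivity) (mul_pos hApos hBpos)
    by_contra hcon
    push_neg at hcon
    linarith only [hPG, hABpos, mul_nonneg h1x2.le (sub_nonneg.mpr hcon)]
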